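/- Fully discrete energy conservation for the Crank–Nicolson Maxwell-GLM scheme: let V, P, W, Q be finite-dimensional real inner product spaces, let C : W →ₗ[ℝ] V, G : P →ₗ[ℝ] V, H : Q →ₗ[ℝ] W be linear maps with adjoints C*, G*, H*, and let Δt : ℝ. Suppose B, B₁ ∈ V, p, p₁ ∈ P, E, E₁ ∈ W, q, q₁ ∈ Q satisfy: B₁ − B + Δt • (C ((1/2) • (E + E₁)) + G ((1/2) • (p + p₁))) = 0; p₁ − p − Δt • G* ((1/2) • (B + B₁)) = 0; E₁ − E − Δt • C* ((1/2) • (B + B₁)) − Δt • H ((1/2) • (q + q₁)) = 0; q₁ − q + Δt • H* ((1/2) • (E + E₁)) = 0. Then ‖B₁‖² + ‖p₁‖² + ‖E₁‖² + ‖q₁‖² = ‖B‖² + ‖p‖² + ‖E‖² + ‖q‖². -/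

import Mathlib

lemma norm_sq_sub_norm_sq {V : Type*} [NormedAddCommGroup V] [InnerProductSpace ℝ V]
    (a b : V) : ‖a‖ ^ 2 - ‖b‖ ^ 2 = inner ℝ (a + b) (a - b) := by
  simp only [inner_add_left, inner_sub_right, real_inner_self_eq_norm_sq,
    real_inner_comm a b]
  ring

/-- Fully discrete energy conservation for the Crank–Nicolson Maxwell-GLM scheme. -/
theorem maxwell_glm_crank_nicolson_energy_conservation
    {V P W Q : Type*}
    [NormedAddCommGroup V] [InnerProductSpace ℝ V] [FiniteDimensional ℝ V]
    [NormedAddCommGroup P] [InnerProductSpace ℝ P] [FiniteDimensional ℝ P]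
    [NormedAddCommGroup W] [InnerProductSpace ℝ W] [FiniteDimensional ℝ W]
    [NormedAddCommGroup Q] [InnerProductSpace ℝ Q] [FiniteDimensional ℝ Q]
    (C : W →ₗ[ℝ] V) (G : P →ₗ[ℝ] V) (H : Q →ₗ[ℝ] W) (Δt : ℝ)
    (B B₁ : V) (p p₁ : P) (E E₁ : W) (q q₁ : Q)
    (h1 : B₁ - B + Δt • (C ((1/2 : ℝ) • (E + E₁)) + G ((1/2 : ℝ) • (p + p₁))) = 0)
    (h2 : p₁ - p - Δt • LinearMap.adjoint G ((1/2 : ℝ) • (B + B₁)) = 0)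
    (h3 : E₁ - E - Δt • LinearMap.adjoint C ((1/2 : ℝ) • (B + B₁))
        - Δt • H ((1/2 : ℝ) • (q + q₁)) = 0)
    (h4 : q₁ - q + Δt • LinearMap.adjoint H ((1/2 : ℝ) • (E + E₁)) = 0) :
    ‖B₁‖ ^ 2 + ‖p₁‖ ^ 2 + ‖E₁‖ ^ 2 + ‖q₁‖ ^ 2 =
    ‖B‖ ^ 2 + ‖p‖ ^ 2 + ‖E‖ ^ 2 + ‖q‖ ^ 2 := by
  set Bm : V := (1/2 : ℝ) • (B + B₁) with hBm
  set pm : P := (1/2 : ℝ) • (p + p₁) with hpm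
  set Em : W := (1/2 : ℝ) • (E + E₁) with hEm
  set qm : Q := (1/2 : ℝ) • (q + q₁) with hqm
  have eB : B₁ - B = -(Δt • (C Em + G pm)) := eq_neg_of_add_eq_zero_left h1
  have ep : p₁ - p = Δt • LinearMap.adjoint G Bm := sub_eq_zero.mp h2
  have eE : E₁ - E = Δt • LinearMap.adjoint C Bm + Δt • H qm := by
    rw [sub_sub, sub_eq_zero] at h3; exact h3
  have eq' : q₁ - q = -(Δt • LinearMap.adjoint H Em) := eq_neg_of_add_eq_zero_left h4
  have sB : B₁ + B = (2 : ℝ) • Bm := by rw [hBm]; module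
  have sp : p₁ + p = (2 : ℝ) • pm := by rw [hpm]; module
  have sE : E₁ + E = (2 : ℝ) • Em := by rw [hEm]; module
  have sq' : q₁ + q = (2 : ℝ) • qm := by rw [hqm]; module
  have kB : ‖B₁‖ ^ 2 - ‖B‖ ^ 2 =
      (-2 * Δt) * (inner ℝ Bm (C Em) + inner ℝ Bm (G pm) : ℝ) := by
    rw [norm_sq_sub_norm_sq, eB, sB]
    simp [inner_smul_left, inner_smul_right, inner_add_right]
    ring
  have kp : ‖p₁‖ ^ 2 - ‖p‖ ^ 2 = (2 * Δt) * (inner ℝ (G pm) Bm : ℝ) := by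
    rw [norm_sq_sub_norm_sq, ep, sp]
    simp [inner_smul_left, inner_smul_right, LinearMap.adjoint_inner_right]
    ring
  have kE : ‖E₁‖ ^ 2 - ‖E‖ ^ 2 =
      (2 * Δt) * (inner ℝ (C Em) Bm + inner ℝ Em (H qm) : ℝ) := by
    rw [norm_sq_sub_norm_sq, eE, sE]
    simp [inner_smul_left, inner_smul_right, inner_add_right,
      LinearMap.adjoint_inner_right]
    ring
  have kq : ‖q₁‖ ^ 2 - ‖q‖ ^ 2 = (-2 * Δt) * (inner ℝ (H qm) Em : ℝ) := by
    rw [norm_sq_sub_norm_sq, eq', sq']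
    simp [inner_smul_left, inner_smul_right, LinearMap.adjoint_inner_right]
    ring
  have c1 : (inner ℝ Bm (C Em) : ℝ) = inner ℝ (C Em) Bm := real_inner_comm _ _
  have c2 : (inner ℝ Bm (G pm) : ℝ) = inner ℝ (G pm) Bm := real_inner_comm _ _
  have c3 : (inner ℝ Em (H qm) : ℝ) = inner ℝ (H qm) Em := real_inner_comm _ _
  linear_combination kB + kp + kE + kq + (-2*Δt)*c1 + (-2*Δt)*c2 + (2*Δt)*c3
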